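/- For all t ∈ [−1, 1], one has 1 − (2/π)·arcsin(t) = (2/π)·arccos(t), and (2/π)·arccos(t) ≥ 0.878·(1 − t). -/

import Mathlib

open Real

private lemma nonneg_of_deriv' {f f' : ℝ → ℝ} (hf : ∀ x, HasDerivAt f (f' x) x)
    (h0 : f 0 = 0) (hf' : ∀ x, 0 ≤ x → 0 ≤ f' x) {x : ℝ} (hx : 0 ≤ x) : 0 ≤ f x := by
  have hmono : MonotoneOn f (Set.Ici 0) := by
    apply monotoneOn_of_deriv_nonneg (convex_Ici 0)
    · exact fun y _ => (hf y).continuousAt.continuousWithinAt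
    · intro y hy
      exact (hf y).differentiableAt.differentiableWithinAt
    · intro y hy
      rw [interior_Ici] at hy
      rw [(hf y).deriv]
      exact hf' y (le_of_lt hy)
  have := hmono (Set.self_mem_Ici) hx hx
  rwa [h0] at this

private lemma taylor_c2 {x : ℝ} (hx : 0 ≤ x) : 0 ≤ Real.cos x - (1 - x^2/2) := by
  apply nonneg_of_deriv' (f' := fun y => y - Real.sin y) ?_ (by norm_num) ?_ hx
  · intro y
    have h := (Real.hasDerivAt_cos y).sub
      ((hasDerivAt_const y (1:ℝ)).sub ((hasDerivAt_pow 2 y).div_const 2))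
    refine h.congr_deriv ?_
    ring
  · intro y hy
    have := Real.sin_le hy
    linarith

private lemma taylor_s3 {x : ℝ} (hx : 0 ≤ x) : 0 ≤ Real.sin x - (x - x^3/6) := by
  apply nonneg_of_deriv' (f' := fun y => Real.cos y - (1 - y^2/2)) ?_ (by norm_num) ?_ hx
  · intro y
    have h := (Real.hasDerivAt_sin y).sub
      ((hasDerivAt_id y).sub ((hasDerivAt_pow 3 y).div_const 6))
    refine h.congr_deriv ?_
    ring
  · exact fun y hy => taylor_c2 hy

private lemma taylor_c4 {x : ℝ} (hx : 0 ≤ x) : 0 ≤ (1 - x^2/2 + x^4/24) - Real.cos x := by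
  apply nonneg_of_deriv' (f' := fun y => Real.sin y - (y - y^3/6)) ?_ (by norm_num) ?_ hx
  · intro y
    have h := (((hasDerivAt_const y (1:ℝ)).sub ((hasDerivAt_pow 2 y).div_const 2)).add
      ((hasDerivAt_pow 4 y).div_const 24)).sub (Real.hasDerivAt_cos y)
    refine h.congr_deriv ?_
    ring
  · exact fun y hy => taylor_s3 hy

private lemma taylor_s5 {x : ℝ} (hx : 0 ≤ x) : 0 ≤ (x - x^3/6 + x^5/120) - Real.sin x := by
  apply nonneg_of_deriv' (f' := fun y => (1 - y^2/2 + y^4/24) - Real.cos y) ?_ (by norm_num) ?_ hx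
  · intro y
    have h := (((hasDerivAt_id y).sub ((hasDerivAt_pow 3 y).div_const 6)).add
      ((hasDerivAt_pow 5 y).div_const 120)).sub (Real.hasDerivAt_sin y)
    refine h.congr_deriv ?_
    ring
  · exact fun y hy => taylor_c4 hy

private lemma taylor_c6 {x : ℝ} (hx : 0 ≤ x) :
    0 ≤ Real.cos x - (1 - x^2/2 + x^4/24 - x^6/720) := by
  apply nonneg_of_deriv' (f' := fun y => (y - y^3/6 + y^5/120) - Real.sin y) ?_ (by norm_num) ?_ hx
  · intro y
    have h := (Real.hasDerivAt_cos y).sub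
      ((((hasDerivAt_const y (1:ℝ)).sub ((hasDerivAt_pow 2 y).div_const 2)).add
        ((hasDerivAt_pow 4 y).div_const 24)).sub ((hasDerivAt_pow 6 y).div_const 720))
    refine h.congr_deriv ?_
    ring
  · exact fun y hy => taylor_s5 hy

private lemma taylor_s7 {x : ℝ} (hx : 0 ≤ x) :
    0 ≤ Real.sin x - (x - x^3/6 + x^5/120 - x^7/5040) := by
  apply nonneg_of_deriv'
    (f' := fun y => Real.cos y - (1 - y^2/2 + y^4/24 - y^6/720)) ?_ (by norm_num) ?_ hx
  · intro y
    have h := (Real.hasDerivAt_sin y).sub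
      ((((hasDerivAt_id y).sub ((hasDerivAt_pow 3 y).div_const 6)).add
        ((hasDerivAt_pow 5 y).div_const 120)).sub ((hasDerivAt_pow 7 y).div_const 5040))
    refine h.congr_deriv ?_
    ring
  · exact fun y hy => taylor_c6 hy

private lemma taylor_c8 {x : ℝ} (hx : 0 ≤ x) :
    0 ≤ (1 - x^2/2 + x^4/24 - x^6/720 + x^8/40320) - Real.cos x := by
  apply nonneg_of_deriv'
    (f' := fun y => Real.sin y - (y - y^3/6 + y^5/120 - y^7/5040)) ?_ (by norm_num) ?_ hx
  · intro y
    have h := (((((hasDerivAt_const y (1:ℝ)).sub ((hasDerivAt_pow 2 y).div_const 2)).add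
      ((hasDerivAt_pow 4 y).div_const 24)).sub ((hasDerivAt_pow 6 y).div_const 720)).add
      ((hasDerivAt_pow 8 y).div_const 40320)).sub (Real.hasDerivAt_cos y)
    refine h.congr_deriv ?_
    ring
  · exact fun y hy => taylor_s7 hy

private lemma taylor_s9 {x : ℝ} (hx : 0 ≤ x) :
    0 ≤ (x - x^3/6 + x^5/120 - x^7/5040 + x^9/362880) - Real.sin x := by
  apply nonneg_of_deriv'
    (f' := fun y => (1 - y^2/2 + y^4/24 - y^6/720 + y^8/40320) - Real.cos y)
    ?_ (by norm_num) ?_ hx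
  · intro y
    have h := (((((hasDerivAt_id y).sub ((hasDerivAt_pow 3 y).div_const 6)).add
      ((hasDerivAt_pow 5 y).div_const 120)).sub ((hasDerivAt_pow 7 y).div_const 5040)).add
      ((hasDerivAt_pow 9 y).div_const 362880)).sub (Real.hasDerivAt_sin y)
    refine h.congr_deriv ?_
    ring
  · exact fun y hy => taylor_c8 hy

private lemma taylor_c10 {x : ℝ} (hx : 0 ≤ x) :
    0 ≤ Real.cos x - (1 - x^2/2 + x^4/24 - x^6/720 + x^8/40320 - x^10/3628800) := by
  apply nonneg_of_deriv'
    (f' := fun y => (y - y^3/6 + y^5/120 - y^7/5040 + y^9/362880) - Real.sin y)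
    ?_ (by norm_num) ?_ hx
  · intro y
    have h := (Real.hasDerivAt_cos y).sub
      ((((((hasDerivAt_const y (1:ℝ)).sub ((hasDerivAt_pow 2 y).div_const 2)).add
        ((hasDerivAt_pow 4 y).div_const 24)).sub ((hasDerivAt_pow 6 y).div_const 720)).add
        ((hasDerivAt_pow 8 y).div_const 40320)).sub ((hasDerivAt_pow 10 y).div_const 3628800))
    refine h.congr_deriv ?_
    ring
  · exact fun y hy => taylor_s9 hy

private lemma poly_key {θ : ℝ} (h0 : 0 ≤ θ) (h1 : θ ≤ 3.141593) :
    1.3791594 * (θ^2/2 - θ^4/24 + θ^6/720 - θ^8/40320 + θ^10/3628800) ≤ θ := by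
  nlinarith [sq_nonneg (θ - 2.3315), sq_nonneg θ, mul_nonneg h0 h0,
    sq_nonneg (θ*(θ-2.3315)), sq_nonneg (θ^2*(θ-2.3315)), sq_nonneg (θ^3*(θ-2.3315)),
    sq_nonneg (θ^4*(θ-2.3315)), mul_nonneg (mul_nonneg h0 h0) h0,
    mul_nonneg (sub_nonneg.2 h1) h0, sq_nonneg (θ^2 - 2.3315*θ)]

/-- for t ∈ [−1,1], 1 − (2/π)arcsin t = (2/π)arccos t and
(2/π)arccos t ≥ 0.878(1 − t). -/
theorem stmt_10 (t : ℝ) (ht : t ∈ Set.Icc (-1:ℝ) 1) :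
    1 - (2 / Real.pi) * Real.arcsin t = (2 / Real.pi) * Real.arccos t ∧
      0.878 * (1 - t) ≤ (2 / Real.pi) * Real.arccos t := by
  obtain ⟨hl, hr⟩ := ht
  have hpi : (0:ℝ) < Real.pi := Real.pi_pos
  constructor
  · rw [Real.arccos]
    field_simp
  · set θ := Real.arccos t with hθdef
    have hθ0 : 0 ≤ θ := Real.arccos_nonneg t
    have hθπ : θ ≤ Real.pi := Real.arccos_le_pi t
    have hub : θ ≤ 3.141593 := hθπ.trans (le_of_lt Real.pi_lt_d6)
    have htc : Real.cos θ = t := Real.cos_arccos hl hr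
    have hc10 := taylor_c10 hθ0
    have hkey : 1.3791594 * (1 - Real.cos θ) ≤ θ := by
      have := poly_key hθ0 hub
      nlinarith [hc10]
    have h1c : 0 ≤ 1 - Real.cos θ := by
      have := Real.cos_le_one θ; linarith
    have hπle : 0.878 * Real.pi ≤ 2 * 1.3791594 := by
      nlinarith [Real.pi_lt_d6]
    have hgoal : 0.878 * (1 - Real.cos θ) * Real.pi ≤ 2 * θ := by
      nlinarith [mul_le_mul_of_nonneg_left hπle h1c]
    rw [← htc]
    rw [div_mul_eq_mul_div, le_div_iff₀ hpi]
    nlinarith [hgoal]
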